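/- With ε : W ⊗ E → E the Clifford-type multiplication on E = Λ•W (as a spin representation via σ), the subrepresentation F = ker ε ⊂ W ⊗ E admits a canonical so(n)-equivariant splitting: the map Π : W ⊗ E → F defined in indices by T_{aα} ↦ T_{aα} + (1/n) ε_{aα}{}^β ε^c{}_β{}^γ T_{cγ} is a projection onto F (Π∘Π = Π, range Π = ker ε), equivariant for the so(n)-action. -/

import Mathlib

noncomputable section

open scoped InnerProductSpace TensorProduct

/-- `W = ℝⁿ`. -/
abbrev W (n : ℕ) := EuclideanSpace ℝ (Fin n)

/-- `E = Λ•W`. -/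
abbrev E (n : ℕ) := ExteriorAlgebra ℝ (W n)

/-- The Clifford-type action `v ↦ (e ↦ v.e = v∧e − v⌟e)` as a linear map
`W → End(Λ•W)`. -/
def clHom (n : ℕ) : W n →ₗ[ℝ] Module.End ℝ (E n) :=
  (LinearMap.mul ℝ (E n)).comp (ExteriorAlgebra.ι ℝ)
    - (CliffordAlgebra.contractLeft (Q := (0 : QuadraticForm ℝ (W n)))).comp
        (innerₗ (W n))

/-- `ε : W ⊗ E → E`, `ε(v ⊗ e) = v.e`. -/
def eps (n : ℕ) : (W n ⊗[ℝ] E n) →ₗ[ℝ] E n :=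
  TensorProduct.lift (clHom n)

/-- `j : E → W ⊗ E`, `j(e) = ∑ᵢ eᵢ ⊗ eᵢ.e` for the standard orthonormal basis. -/
def jmap (n : ℕ) : E n →ₗ[ℝ] (W n ⊗[ℝ] E n) :=
  ∑ a : Fin n,
    (TensorProduct.mk ℝ (W n) (E n) (EuclideanSpace.basisFun (Fin n) ℝ a)).comp
      (clHom n (EuclideanSpace.basisFun (Fin n) ℝ a))

/-- The splitting map `Π : W ⊗ E → W ⊗ E`,
`Π(w⊗e) = w⊗e + (1/n) ∑ᵢ eᵢ ⊗ eᵢ.(w.e)`, i.e. in indices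
`T_{aα} ↦ T_{aα} + (1/n) ε_{aα}{}^β ε^c{}_β{}^γ T_{cγ}`. -/
def proj (n : ℕ) : (W n ⊗[ℝ] E n) →ₗ[ℝ] (W n ⊗[ℝ] E n) :=
  LinearMap.id + (1 / (n : ℝ)) • ((jmap n).comp (eps n))

/-- The spin action of the simple bivector `t∧u` on `E = Λ•W`:
`σ(t∧u) = −(1/8)(t.u. − u.t.)`. -/
def spinEnd (n : ℕ) (t u : W n) : Module.End ℝ (E n) :=
  (-(1/8 : ℝ)) • (clHom n t * clHom n u - clHom n u * clHom n t)

/-- The standard action of the simple bivector `t∧u ∈ Λ²W = so(n)` on `W`: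
`v ↦ (1/2)(⟨u,v⟩t − ⟨t,v⟩u)`. -/
def bivEnd (n : ℕ) (t u : W n) : W n →ₗ[ℝ] W n :=
  (1/2 : ℝ) • ((innerₗ (W n) u).smulRight t - (innerₗ (W n) t).smulRight u)

/-- The diagonal `so(n)`-action of the simple bivector `t∧u` on `W ⊗ E`. -/
def actWE (n : ℕ) (t u : W n) : (W n ⊗[ℝ] E n) →ₗ[ℝ] (W n ⊗[ℝ] E n) :=
  TensorProduct.map (bivEnd n t u) LinearMap.id
    + TensorProduct.map LinearMap.id (spinEnd n t u)

lemma clHom_apply (n : ℕ) (v : W n) (x : E n) :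
    clHom n v x = ExteriorAlgebra.ι ℝ v * x
      - CliffordAlgebra.contractLeft (Q := (0 : QuadraticForm ℝ (W n))) (innerₗ (W n) v) x := rfl

open CliffordAlgebra in
lemma cl_anticomm (n : ℕ) (v w : W n) :
    clHom n v * clHom n w + clHom n w * clHom n v
      = (-(2 * ⟪v, w⟫_ℝ)) • (1 : Module.End ℝ (E n)) := by
  refine LinearMap.ext fun x => ?_
  simp only [LinearMap.add_apply, Module.End.mul_apply, clHom_apply, mul_sub, map_sub,
    contractLeft_ι_mul, innerₗ_apply_apply, LinearMap.smul_apply, Module.End.one_apply]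
  rw [contractLeft_comm]
  have h : ExteriorAlgebra.ι ℝ v * (ExteriorAlgebra.ι ℝ w * x)
      + ExteriorAlgebra.ι ℝ w * (ExteriorAlgebra.ι ℝ v * x) = 0 := by
    rw [← mul_assoc, ← mul_assoc, ← add_mul, ExteriorAlgebra.ι_add_mul_swap, zero_mul]
  rw [real_inner_comm w v]
  abel_nf
  rw [add_left_comm, h, add_zero]
  match_scalars
  simp only [zsmul_eq_mul, Int.cast_neg, Int.cast_one]
  ring







lemma bivEnd_apply (n : ℕ) (t u v : W n) :
    bivEnd n t u v = (1/2 : ℝ) • (⟪u, v⟫_ℝ • t - ⟪t, v⟫_ℝ • u) := by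
  simp [bivEnd]

lemma cl_sq_apply (n : ℕ) (v : W n) (x : E n) :
    clHom n v (clHom n v x) = (-⟪v, v⟫_ℝ) • x := by
  have h := LinearMap.congr_fun (cl_anticomm n v v) x
  simp only [LinearMap.add_apply, Module.End.mul_apply, LinearMap.smul_apply,
    Module.End.one_apply] at h
  have h2 : (2:ℝ) • clHom n v (clHom n v x) = (2:ℝ) • (-⟪v, v⟫_ℝ) • x := by
    rw [two_smul]
    rw [h]
    match_scalars; ring
  exact smul_right_injective _ (by norm_num) h2

lemma spin_comm (n : ℕ) (t u v : W n) :
    spinEnd n t u * clHom n v - clHom n v * spinEnd n t u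
      = clHom n (bivEnd n t u v) := by
  set a := clHom n t
  set b := clHom n u
  set x := clHom n v
  have hax : a * x = (-(2 * ⟪t, v⟫_ℝ)) • 1 - x * a := eq_sub_of_add_eq (cl_anticomm n t v)
  have hbx : b * x = (-(2 * ⟪u, v⟫_ℝ)) • 1 - x * b := eq_sub_of_add_eq (cl_anticomm n u v)
  have h1 : (a*b)*x = (-(2 * ⟪u, v⟫_ℝ)) • a - (-(2 * ⟪t, v⟫_ℝ)) • b + x*(a*b) := by
    rw [mul_assoc, hbx, mul_sub, mul_smul_comm, mul_one, ← mul_assoc, hax, sub_mul,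
      smul_mul_assoc, one_mul, mul_assoc]
    abel
  have h2 : (b*a)*x = (-(2 * ⟪t, v⟫_ℝ)) • b - (-(2 * ⟪u, v⟫_ℝ)) • a + x*(b*a) := by
    rw [mul_assoc, hax, mul_sub, mul_smul_comm, mul_one, ← mul_assoc, hbx, sub_mul,
      smul_mul_assoc, one_mul, mul_assoc]
    abel
  have hrhs : clHom n (bivEnd n t u v)
      = (1/2 : ℝ) • (⟪u, v⟫_ℝ • a - ⟪t, v⟫_ℝ • b) := by
    rw [bivEnd_apply]
    simp only [map_smul, map_sub]
    rfl
  rw [hrhs]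
  show (-(1/8 : ℝ)) • (a*b - b*a) * x - x * ((-(1/8 : ℝ)) • (a*b - b*a)) = _
  rw [smul_mul_assoc, mul_smul_comm, sub_mul, mul_sub, h1, h2]
  match_scalars <;> ring

local notation "bb" n => EuclideanSpace.basisFun (Fin n) ℝ

lemma sum_inner_smul (n : ℕ) (v : W n) :
    ∑ a : Fin n, ⟪v, (bb n) a⟫_ℝ • ((bb n) a : W n) = v := by
  have := (EuclideanSpace.basisFun (Fin n) ℝ).sum_repr' v
  simpa [real_inner_comm] using this

lemma sum1 (n : ℕ) (v : W n) (x : E n) :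
    ∑ a : Fin n, ⟪v, (bb n) a⟫_ℝ • clHom n ((bb n) a) x = clHom n v x := by
  have : ∀ a : Fin n, ⟪v, (bb n) a⟫_ℝ • clHom n ((bb n) a) x
      = (⟪v, (bb n) a⟫_ℝ • clHom n ((bb n) a)) x := fun a => rfl
  simp_rw [this]
  rw [← LinearMap.sum_apply]
  congr 1
  calc (∑ a : Fin n, ⟪v, (bb n) a⟫_ℝ • clHom n ((bb n) a))
      = clHom n (∑ a : Fin n, ⟪v, (bb n) a⟫_ℝ • ((bb n) a : W n)) := by
        rw [map_sum]; simp only [map_smul]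
    _ = clHom n v := by rw [sum_inner_smul]

lemma sum2 (n : ℕ) (v : W n) (y : E n) :
    ∑ a : Fin n, ⟪v, (bb n) a⟫_ℝ • (((bb n) a : W n) ⊗ₜ[ℝ] y) = v ⊗ₜ[ℝ] y := by
  calc ∑ a : Fin n, ⟪v, (bb n) a⟫_ℝ • (((bb n) a : W n) ⊗ₜ[ℝ] y)
      = ∑ a : Fin n, ((⟪v, (bb n) a⟫_ℝ • ((bb n) a : W n)) ⊗ₜ[ℝ] y) := by
        simp_rw [TensorProduct.smul_tmul']
    _ = (∑ a : Fin n, ⟪v, (bb n) a⟫_ℝ • ((bb n) a : W n)) ⊗ₜ[ℝ] y := by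
        rw [TensorProduct.sum_tmul]
    _ = v ⊗ₜ[ℝ] y := by rw [sum_inner_smul]

lemma orth_self (n : ℕ) (a : Fin n) : ⟪((bb n) a : W n), ((bb n) a : W n)⟫_ℝ = 1 := by
  have := (EuclideanSpace.basisFun (Fin n) ℝ).orthonormal
  exact (orthonormal_iff_ite.mp this a a).trans (by simp)

lemma eps_j (n : ℕ) : (eps n).comp (jmap n) = (-(n : ℝ)) • LinearMap.id := by
  refine LinearMap.ext fun e => ?_
  simp only [eps, jmap, LinearMap.comp_apply, LinearMap.sum_apply, LinearMap.coe_comp,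
    Function.comp_apply, TensorProduct.mk_apply, map_sum, TensorProduct.lift.tmul,
    LinearMap.smul_apply, LinearMap.id_apply]
  simp_rw [cl_sq_apply, orth_self]
  rw [Finset.sum_const, Finset.card_univ, Fintype.card_fin]
  match_scalars
  simp

lemma clbiv_apply (n : ℕ) (t u v : W n) (e : E n) :
    clHom n (bivEnd n t u v) e
      = (1/2 : ℝ) • (⟪u, v⟫_ℝ • clHom n t e - ⟪t, v⟫_ℝ • clHom n u e) := by
  rw [bivEnd_apply]
  simp only [map_smul, map_sub, LinearMap.smul_apply, LinearMap.sub_apply]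

lemma cl_spin_apply (n : ℕ) (t u v : W n) (e : E n) :
    clHom n v (spinEnd n t u e)
      = spinEnd n t u (clHom n v e) - clHom n (bivEnd n t u v) e := by
  have h := LinearMap.congr_fun (spin_comm n t u v) e
  simp only [LinearMap.sub_apply, Module.End.mul_apply] at h
  rw [← h]
  abel

lemma sumA (n : ℕ) (t u : W n) (e : E n) :
    ∑ a : Fin n, ((bb n) a : W n) ⊗ₜ[ℝ] clHom n (bivEnd n t u ((bb n) a)) e
      = (1/2 : ℝ) • ((u ⊗ₜ[ℝ] clHom n t e) - (t ⊗ₜ[ℝ] clHom n u e)) := by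
  calc ∑ a : Fin n, ((bb n) a : W n) ⊗ₜ[ℝ] clHom n (bivEnd n t u ((bb n) a)) e
      = ∑ a : Fin n, (1/2 : ℝ) • (⟪u, (bb n) a⟫_ℝ • (((bb n) a : W n) ⊗ₜ[ℝ] clHom n t e)
          - ⟪t, (bb n) a⟫_ℝ • (((bb n) a : W n) ⊗ₜ[ℝ] clHom n u e)) := by
        refine Finset.sum_congr rfl fun a _ => ?_
        rw [clbiv_apply]
        simp only [TensorProduct.tmul_smul, TensorProduct.tmul_sub]
    _ = (1/2 : ℝ) • ((∑ a : Fin n, ⟪u, (bb n) a⟫_ℝ • (((bb n) a : W n) ⊗ₜ[ℝ] clHom n t e))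
          - ∑ a : Fin n, ⟪t, (bb n) a⟫_ℝ • (((bb n) a : W n) ⊗ₜ[ℝ] clHom n u e)) := by
        rw [← Finset.smul_sum, Finset.sum_sub_distrib]
    _ = _ := by rw [sum2, sum2]

lemma sumB (n : ℕ) (t u : W n) (e : E n) :
    ∑ a : Fin n, (bivEnd n t u ((bb n) a)) ⊗ₜ[ℝ] clHom n ((bb n) a) e
      = (1/2 : ℝ) • ((t ⊗ₜ[ℝ] clHom n u e) - (u ⊗ₜ[ℝ] clHom n t e)) := by
  calc ∑ a : Fin n, (bivEnd n t u ((bb n) a)) ⊗ₜ[ℝ] clHom n ((bb n) a) e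
      = ∑ a : Fin n, (1/2 : ℝ) • (⟪u, (bb n) a⟫_ℝ • (t ⊗ₜ[ℝ] clHom n ((bb n) a) e)
          - ⟪t, (bb n) a⟫_ℝ • (u ⊗ₜ[ℝ] clHom n ((bb n) a) e)) := by
        refine Finset.sum_congr rfl fun a _ => ?_
        rw [bivEnd_apply]
        simp only [← TensorProduct.smul_tmul', TensorProduct.sub_tmul]
    _ = (1/2 : ℝ) • ((∑ a : Fin n, ⟪u, (bb n) a⟫_ℝ • (t ⊗ₜ[ℝ] clHom n ((bb n) a) e))
          - ∑ a : Fin n, ⟪t, (bb n) a⟫_ℝ • (u ⊗ₜ[ℝ] clHom n ((bb n) a) e)) := by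
        rw [← Finset.smul_sum, Finset.sum_sub_distrib]
    _ = (1/2 : ℝ) • ((t ⊗ₜ[ℝ] ∑ a : Fin n, ⟪u, (bb n) a⟫_ℝ • clHom n ((bb n) a) e)
          - (u ⊗ₜ[ℝ] ∑ a : Fin n, ⟪t, (bb n) a⟫_ℝ • clHom n ((bb n) a) e)) := by
        rw [TensorProduct.tmul_sum, TensorProduct.tmul_sum]
        simp_rw [TensorProduct.tmul_smul]
    _ = _ := by rw [sum1, sum1]

lemma j_equiv (n : ℕ) (t u : W n) :
    (jmap n).comp (spinEnd n t u) = (actWE n t u).comp (jmap n) := by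
  refine LinearMap.ext fun e => ?_
  simp only [jmap, actWE, LinearMap.comp_apply, LinearMap.sum_apply, LinearMap.coe_comp,
    Function.comp_apply, TensorProduct.mk_apply, LinearMap.add_apply, map_sum,
    TensorProduct.map_tmul, LinearMap.id_coe, id_eq]
  simp_rw [cl_spin_apply, TensorProduct.tmul_sub]
  rw [Finset.sum_sub_distrib, sumA, Finset.sum_add_distrib, sumB]
  module

lemma eps_equiv (n : ℕ) (t u : W n) :
    (eps n).comp (actWE n t u) = (spinEnd n t u).comp (eps n) := by
  refine TensorProduct.ext' fun v e => ?_
  simp only [eps, actWE, LinearMap.comp_apply, LinearMap.add_apply, TensorProduct.map_tmul,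
    LinearMap.id_coe, id_eq, map_add, TensorProduct.lift.tmul]
  rw [cl_spin_apply]
  abel

lemma proj_apply (n : ℕ) (x : W n ⊗[ℝ] E n) :
    proj n x = x + (1 / (n : ℝ)) • jmap n (eps n x) := rfl

lemma eps_proj (n : ℕ) : (eps n).comp (proj n) = 0 := by
  rcases Nat.eq_zero_or_pos n with h | h
  · subst h
    have h0 : eps 0 = 0 := by
      apply TensorProduct.ext'
      intro v e
      have hv : v = (0 : W 0) := Subsingleton.elim _ _
      rw [hv, TensorProduct.zero_tmul, map_zero, LinearMap.zero_apply]
    refine LinearMap.ext fun x => ?_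
    simp [h0]
  · refine LinearMap.ext fun x => ?_
    have hne : (n : ℝ) ≠ 0 := Nat.cast_ne_zero.mpr h.ne'
    simp only [LinearMap.comp_apply, LinearMap.zero_apply, proj_apply, map_add, map_smul]
    have hj := LinearMap.congr_fun (eps_j n) (eps n x)
    simp only [LinearMap.comp_apply, LinearMap.smul_apply, LinearMap.id_apply] at hj
    rw [hj, smul_smul]
    have : 1 / (n : ℝ) * -(n : ℝ) = -1 := by field_simp
    rw [this, neg_one_smul, add_neg_cancel]


/-- The subrepresentation `F = ker ε ⊂ W ⊗ E` admits a canonical `so(n)`-equivariant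
splitting: `Π` is a projection onto `F = ker ε`, equivariant for the `so(n)`-action. -/
theorem proj_is_equivariant_projection (n : ℕ) :
    (proj n).comp (proj n) = proj n
      ∧ LinearMap.range (proj n) = LinearMap.ker (eps n)
      ∧ ∀ t u : W n, (proj n).comp (actWE n t u) = (actWE n t u).comp (proj n) := by
  have hep : ∀ x, eps n (proj n x) = 0 := fun x => by
    simpa using LinearMap.congr_fun (eps_proj n) x
  refine ⟨?_, ?_, ?_⟩
  · refine LinearMap.ext fun x => ?_
    simp only [LinearMap.comp_apply]
    rw [proj_apply n (proj n x), hep, map_zero, smul_zero, add_zero]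
  · apply le_antisymm
    · rintro _ ⟨x, rfl⟩
      exact LinearMap.mem_ker.mpr (hep x)
    · intro x hx
      exact ⟨x, by rw [proj_apply, LinearMap.mem_ker.mp hx, map_zero, smul_zero, add_zero]⟩
  · intro t u
    refine LinearMap.ext fun x => ?_
    simp only [LinearMap.comp_apply]
    rw [proj_apply, proj_apply, map_add, map_smul]
    have h1 := LinearMap.congr_fun (eps_equiv n t u) x
    have h2 := LinearMap.congr_fun (j_equiv n t u) (eps n x)
    simp only [LinearMap.comp_apply] at h1 h2
    rw [h1, h2]
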